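/- Let M ∈ M̂_m have total entry sum m' and row sums α = (α_1,…,α_m), and let w ∈ S_{m'} be the standardization of the two-line array w_M: the top row becomes 1,2,…,m' and, for each i, the α_i bottom-row entries equal to i are replaced, from left to right, by the values β_i, β_i−1, …, β_{i−1}+1 in decreasing order, where β_i = α_1+⋯+α_i. Then w is an involution of {1,…,m'} without fixed points, and w(β_{i−1}+1) > w(β_{i−1}+2) > ⋯ > w(β_i) for every i. -/

import Mathlib

open scoped Classical

namespace KingSSOT

/-! ### Partitions -/

def zeroP : ℕ → ℕ := fun _ => 0

/-- `p` is a partition: weakly decreasing row lengths, eventually zero. -/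
def IsPartition (p : ℕ → ℕ) : Prop :=
  (∀ i, p (i + 1) ≤ p i) ∧ ∃ N, p N = 0

/-- number of boxes of a partition -/
noncomputable def psize (p : ℕ → ℕ) : ℕ :=
  sSup (Set.range fun N => ∑ i ∈ Finset.range N, p i)

/-- length of the `j`-th column (columns indexed starting at 1) -/
noncomputable def colLen (p : ℕ → ℕ) (j : ℕ) : ℕ := sInf {r | p r < j}

/-! ### Oscillating horizontal strips -/

/-- apply one step of a row sequence: a positive entry `r` adds a box in (1-indexed) row `r`,
a negative entry `-r` removes a box from row `r`. -/
def applyStep (p : ℕ → ℕ) (r : ℤ) : ℕ → ℕ := fun k =>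
  if (k : ℤ) + 1 = r then p k + 1 else if (k : ℤ) + 1 = -r then p k - 1 else p k

/-- the sequence of partitions of an oscillating horizontal strip with given inside
and row sequence -/
def partsOf (p0 : ℕ → ℕ) (rows : List ℤ) : List (ℕ → ℕ) := rows.scanl applyStep p0

def outsideOf (p0 : ℕ → ℕ) (rows : List ℤ) : ℕ → ℕ := rows.foldl applyStep p0

/-- the maximal partition `S_*` of an oscillating horizontal strip -/
def starOf (p0 : ℕ → ℕ) (rows : List ℤ) : ℕ → ℕ :=
  (rows.filter fun z => decide (0 < z)).foldl applyStep p0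

/-- `q` is obtained from `p` by adding one box in (0-indexed) row `i` -/
def AddBox (p q : ℕ → ℕ) (i : ℕ) : Prop := q i = p i + 1 ∧ ∀ k, k ≠ i → q k = p k

def StepOK (p : ℕ → ℕ) (r : ℤ) : Prop :=
  (∃ i : ℕ, r = (i : ℤ) + 1 ∧ AddBox p (applyStep p r) i) ∨
  (∃ i : ℕ, r = -((i : ℤ) + 1) ∧ AddBox (applyStep p r) p i)

/-- `(p0, rows)` encodes an oscillating horizontal strip: all intermediate shapes are
partitions, all steps genuinely add/remove one box, and the row numbers are weakly
decreasing. -/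
def IsOHS (p0 : ℕ → ℕ) (rows : List ℤ) : Prop :=
  IsPartition p0 ∧ List.Chain' (· ≥ ·) rows ∧
  (∀ q ∈ partsOf p0 rows, IsPartition q) ∧
  ∀ k, k < rows.length → StepOK ((partsOf p0 rows).getD k zeroP) (rows.getD k 0)

/-- a list of partitions forms an oscillating horizontal strip -/
def IsOHSspan (l : List (ℕ → ℕ)) : Prop :=
  ∃ rows : List ℤ, IsOHS (l.headD zeroP) rows ∧ partsOf (l.headD zeroP) rows = l

/-! ### (Skew) semistandard oscillating tableaux -/

/-- data of a (skew) semistandard oscillating tableau: for each `i`, the inside partition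
and the row sequence of the `(i+1)`-st oscillating horizontal strip `T^{(i+1)}`. -/
structure SSOT where
  ins : ℕ → ℕ → ℕ
  rows : ℕ → List ℤ

def IsSSOT (T : SSOT) : Prop :=
  (∀ i, IsOHS (T.ins i) (T.rows i)) ∧
  (∀ i, T.ins (i + 1) = outsideOf (T.ins i) (T.rows i)) ∧
  ∃ N, ∀ i, N ≤ i → T.rows i = []

def OutsideIs (T : SSOT) (ν : ℕ → ℕ) : Prop := ∃ N, ∀ i, N ≤ i → T.ins i = ν

/-- every partition occurring in `T` has at most `g` columns, i.e. `c(T) ≤ g` -/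
def cBound (g : ℕ) (T : SSOT) : Prop :=
  ∀ i, ∀ q ∈ partsOf (T.ins i) (T.rows i), q 0 ≤ g

def wtOf (T : SSOT) : ℕ → ℕ := fun i => (T.rows i).length

/-- membership in `SSOT_g(ν, m)` with inside `lam` (`lam = zeroP` for honest SSOT) -/
def SSOTmem (g m : ℕ) (lam ν : ℕ → ℕ) (T : SSOT) : Prop :=
  IsSSOT T ∧ T.ins 0 = lam ∧ OutsideIs T ν ∧ (∀ i, m ≤ i → T.rows i = []) ∧ cBound g T

/-- the crystal weight `(g - α_1, …, g - α_m)` of an element of `SSOT_g(ν,m)` -/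
def cwt (g : ℕ) (T : SSOT) : ℕ → ℤ := fun i => (g : ℤ) - (T.rows i).length

/-- complement `μ̂` of `μ` in the `m × g` rectangle: `μ̂_i = g - μ_{m+1-i}` -/
def hatP (m g : ℕ) (μ : ℕ → ℕ) : ℕ → ℕ := fun i => if i < m then g - μ (m - 1 - i) else 0

/-! ### King tableaux -/

/-- A King tableau of shape `μ` for `Sp(2m)`.  The alphabet `1 < 1̄ < 2 < 2̄ < ⋯ < m < m̄`
is encoded by `i ↦ 2i-1`, `ī ↦ 2i`.  Rows and columns are 0-indexed. -/
structure King (m : ℕ) (μ : ℕ → ℕ) where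
  entry : ℕ → ℕ → ℕ
  rowsWeak : ∀ r c, c + 1 < μ r → entry r c ≤ entry r (c + 1)
  colsStrict : ∀ r c, c < μ (r + 1) → entry r c < entry (r + 1) c
  symplectic : ∀ r c, c < μ r → 2 * r + 1 ≤ entry r c
  upperBound : ∀ r c, c < μ r → entry r c ≤ 2 * m
  zeroOutside : ∀ r c, ¬ c < μ r → entry r c = 0

/-- `T` has an entry with value `v` somewhere in (0-indexed) column `c` -/
def hasEntry {m : ℕ} {μ : ℕ → ℕ} (T : King m μ) (c v : ℕ) : Prop :=
  ∃ r, c < μ r ∧ T.entry r c = v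

def countEntry (m g : ℕ) {μ : ℕ → ℕ} (T : King m μ) (v : ℕ) : ℕ :=
  ((Finset.range m ×ˢ Finset.range g).filter
    (fun rc => rc.2 < μ rc.1 ∧ T.entry rc.1 rc.2 = v)).card

/-- the crystal weight of a King tableau: `α_i = #(i) - #(ī)` (here `i` is 0-indexed). -/
def kingWt (m g : ℕ) {μ : ℕ → ℕ} (T : King m μ) : ℕ → ℤ :=
  fun i => (countEntry m g T (2 * i + 1) : ℤ) - countEntry m g T (2 * i + 2)

/-- The defining property of King's bijection `Ψ_{m,g}`: for each `i < m` (the strip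
`T^{(i+1)}` of `S`), the horizontal strip `S_*/inside` has no box in (1-indexed) column `j`
iff the letter `i+1` occurs in (0-indexed) column `g-j` of the King tableau, and
`S_*/outside` has a box in column `j` iff the letter `\overline{i+1}` occurs in column
`g-j`; moreover all partitions of the strips fit in `g` columns. -/
def PsiRel (m g : ℕ) {μ : ℕ → ℕ} (T : King m μ) (S : SSOT) : Prop :=
  ∀ i, i < m →
    (starOf (S.ins i) (S.rows i)) 0 ≤ g ∧
    ∀ j, 1 ≤ j → j ≤ g →
      ((colLen (starOf (S.ins i) (S.rows i)) j = colLen (S.ins i) j) ↔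
        hasEntry T (g - j) (2 * i + 1)) ∧
      ((colLen (starOf (S.ins i) (S.rows i)) j
          = colLen (outsideOf (S.ins i) (S.rows i)) j + 1) ↔
        hasEntry T (g - j) (2 * i + 2))



/-! ### Semistandard Young tableaux as lists of rows, Schensted insertion -/

/-- Schensted row insertion (row bumping) of a letter into a tableau:
bump the first entry strictly larger than the inserted letter. -/
def rowInsert : List (List ℕ) → ℕ → List (List ℕ)
  | [], a => [[a]]
  | r :: rest, a =>
    match r.findIdx? (fun x => decide (a < x)) with
    | none => (r ++ [a]) :: rest
    | some k => r.set k a :: rowInsert rest (r.getD k 0)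

def shapeOf (Q : List (List ℕ)) : ℕ → ℕ := fun r => (Q.getD r []).length

def sizeT (Q : List (List ℕ)) : ℕ := Q.flatten.length

/-- add the entry `x` at the end of (0-indexed) row `r` -/
def placeAt (Q : List (List ℕ)) (r x : ℕ) : List (List ℕ) :=
  if r < Q.length then Q.set r ((Q.getD r []) ++ [x]) else Q ++ [[x]]

def maxEntry (Q : List (List ℕ)) : ℕ := Q.flatten.foldr max 0

/-- remove the rightmost cell containing `x` (for `x` the largest entry of `Q`,
this is the last cell of the topmost row containing `x`). -/
def removeRM (x : ℕ) (Q : List (List ℕ)) : List (List ℕ) :=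
  let r := Q.findIdx (fun row => row.contains x)
  (Q.set r ((Q.getD r []).dropLast)).filter (fun row => !row.isEmpty)

/-- repeatedly (k times) remove the rightmost cell containing the current largest entry -/
def stripK : ℕ → List (List ℕ) → List (List ℕ)
  | 0, Q => Q
  | k + 1, Q => stripK k (removeRM (maxEntry Q) Q)

def getCol (Q : List (List ℕ)) (j : ℕ) : List ℕ := Q.filterMap (fun r => r[j]?)

def transposeT (Q : List (List ℕ)) : List (List ℕ) :=
  (List.range (Q.headD []).length).map (getCol Q)

/-- auxiliary "weak" row bumping (bump the first entry `≥ a`), used to define column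
insertion via transposition. -/
def rowInsertW : List (List ℕ) → ℕ → List (List ℕ)
  | [], a => [[a]]
  | r :: rest, a =>
    match r.findIdx? (fun x => decide (a ≤ x)) with
    | none => (r ++ [a]) :: rest
    | some k => r.set k a :: rowInsertW rest (r.getD k 0)

/-- Schensted column insertion of a letter into a semistandard tableau -/
def colInsert (Q : List (List ℕ)) (a : ℕ) : List (List ℕ) :=
  transposeT (rowInsertW (transposeT Q) a)

def IsSSYT (Q : List (List ℕ)) : Prop :=
  (∀ row ∈ Q, row ≠ [] ∧ List.Chain' (· ≤ ·) row) ∧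
  List.Chain' (· ≥ ·) (Q.map List.length) ∧
  (∀ r c, c < (Q.getD (r + 1) []).length →
    (Q.getD r []).getD c 0 < (Q.getD (r + 1) []).getD c 0)

/-! ### Matrices, two-line arrays, and column RSK -/

/-- the two-line array `w_M` of a matrix (`1`-indexed entries, support in `[1,n]²`):
top entries weakly increasing, bottom entries weakly decreasing within a fixed top entry. -/
def twoLine (M : ℕ → ℕ → ℕ) (n : ℕ) : List (ℕ × ℕ) :=
  (List.range n).flatMap fun i =>
    ((List.range n).reverse).flatMap fun j =>
      List.replicate (M (i + 1) (j + 1)) (i + 1, j + 1)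

/-- the `P`-tableau of column RSK: column-insert the bottom row of `w_M` -/
def PM (M : ℕ → ℕ → ℕ) (n : ℕ) : List (List ℕ) :=
  (twoLine M n).foldl (fun Q c => colInsert Q c.2) []

def trM (M : ℕ → ℕ → ℕ) : ℕ → ℕ → ℕ := fun p q => M q p

/-- the `Q`-tableau of column RSK: `Q(M) = P(Mᵀ)` -/
def Qm (M : ℕ → ℕ → ℕ) (n : ℕ) : List (List ℕ) := PM (trM M) n

def rowSumM (M : ℕ → ℕ → ℕ) (n i : ℕ) : ℕ := ∑ j ∈ Finset.range n, M i (j + 1)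

def suppIn (M : ℕ → ℕ → ℕ) (n : ℕ) : Prop :=
  ∀ p q, M p q ≠ 0 → 1 ≤ p ∧ p ≤ n ∧ 1 ≤ q ∧ q ≤ n

/-- membership in `M̂_m^g`: symmetric, even diagonal, `c(M) ≤ 2g` -/
def MhatMem (m g : ℕ) (M : ℕ → ℕ → ℕ) : Prop :=
  suppIn M m ∧ (∀ p q, M p q = M q p) ∧ (∀ p, 2 ∣ M p p) ∧
  ((PM M m).headD []).length ≤ 2 * g

/-! ### type-A crystal operators on tableaux -/

/-- row reading word with cell positions: rows top to bottom, right to left in each row -/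
def cellsOf (Q : List (List ℕ)) : List (ℕ × ℕ × ℕ) :=
  (Q.zipIdx.map Prod.swap).flatMap fun p => ((p.2.zipIdx.map Prod.swap).reverse).map fun q => (p.1, q.1, q.2)

/-- bracketing for letters `i, i+1` along the reading word.  Returns the positions of
unpaired letters `i+1` (chronological order) and the stack of unpaired `i`'s
(most recent first). -/
def pairState (i : ℕ) (cs : List (ℕ × ℕ × ℕ)) : List (ℕ × ℕ) × List (ℕ × ℕ) :=
  cs.foldl
    (fun st c =>
      if c.2.2 = i then (st.1, (c.1, c.2.1) :: st.2)
      else if c.2.2 = i + 1 then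
        match st.2 with
        | [] => (st.1 ++ [(c.1, c.2.1)], st.2)
        | _ :: t => (st.1, t)
      else st)
    ([], [])

def setCell (Q : List (List ℕ)) (r c v : ℕ) : List (List ℕ) :=
  Q.set r ((Q.getD r []).set c v)

/-- crystal operator `e_i` on semistandard tableaux: change the last unpaired `i+1` to `i` -/
def eT (i : ℕ) (Q : List (List ℕ)) : Option (List (List ℕ)) :=
  match (pairState i (cellsOf Q)).1.getLast? with
  | none => none
  | some rc => some (setCell Q rc.1 rc.2 i)

/-- crystal operator `f_i` on semistandard tableaux: change the first unpaired `i` to `i+1` -/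
def fT (i : ℕ) (Q : List (List ℕ)) : Option (List (List ℕ)) :=
  match (pairState i (cellsOf Q)).2.getLast? with
  | none => none
  | some rc => some (setCell Q rc.1 rc.2 (i + 1))

/-! ### operators `e_i^Q`, `e_i^P` on matrices -/

/-- bottom entries of the columns of `w_M` with top entry `i`, in weakly decreasing order -/
def rowListM (M : ℕ → ℕ → ℕ) (n i : ℕ) : List ℕ :=
  ((List.range n).reverse).flatMap fun j => List.replicate (M i (j + 1)) (j + 1)

/-- remove the first element `< q` from a weakly decreasing list (i.e. the largest one) -/
def removeLtNat (q : ℕ) : List ℕ → Option (List ℕ)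
  | [] => none
  | p :: t => if p < q then some t else (removeLtNat q t).map (p :: ·)

/-- pairing `(p, q)`, `p < q`, between the (decreasingly sorted) bottom entries of rows
`i` and `i+1`; returns (unpaired elements of `A`, unpaired elements of `B`),
both in decreasing order. -/
def pairRows (A B : List ℕ) : List ℕ × List ℕ :=
  B.foldl
    (fun st q =>
      match removeLtNat q st.1 with
      | some A' => (A', st.2)
      | none => (st.1, st.2 ++ [q]))
    (A, [])

def updM (M : ℕ → ℕ → ℕ) (a b v : ℕ) : ℕ → ℕ → ℕ :=
  fun p q => if p = a ∧ q = b then v else M p q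

/-- `e_i^Q`: replace the unpaired column `(i+1; b)` of `w_M` with largest `b` by `(i; b)` -/
def eQmat (M : ℕ → ℕ → ℕ) (n i : ℕ) : Option (ℕ → ℕ → ℕ) :=
  match (pairRows (rowListM M n i) (rowListM M n (i + 1))).2.head? with
  | none => none
  | some b => some (updM (updM M (i + 1) b (M (i + 1) b - 1)) i b (M i b + 1))

/-- `f_i^Q`: replace the unpaired column `(i; a)` of `w_M` with smallest `a` by `(i+1; a)` -/
def fQmat (M : ℕ → ℕ → ℕ) (n i : ℕ) : Option (ℕ → ℕ → ℕ) :=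
  match (pairRows (rowListM M n i) (rowListM M n (i + 1))).1.getLast? with
  | none => none
  | some a => some (updM (updM M i a (M i a - 1)) (i + 1) a (M (i + 1) a + 1))

def ePmat (M : ℕ → ℕ → ℕ) (n i : ℕ) : Option (ℕ → ℕ → ℕ) :=
  (eQmat (trM M) n i).map trM

def fPmat (M : ℕ → ℕ → ℕ) (n i : ℕ) : Option (ℕ → ℕ → ℕ) :=
  (fQmat (trM M) n i).map trM

/-- `ẽ_i = e_i^P ∘ e_i^Q` on matrices -/
def etM (M : ℕ → ℕ → ℕ) (n i : ℕ) : Option (ℕ → ℕ → ℕ) :=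
  (eQmat M n i).bind fun M' => ePmat M' n i

/-- `f̃_i = f_i^P ∘ f_i^Q` on matrices -/
def ftM (M : ℕ → ℕ → ℕ) (n i : ℕ) : Option (ℕ → ℕ → ℕ) :=
  (fQmat M n i).bind fun M' => fPmat M' n i


/-! ### Φ and local operators -/


/-- standardization: concatenate the partition sequences of the strips of `T`
(up to strip `N`), dropping repeated endpoints -/
def stdConcat (T : SSOT) (N : ℕ) : List (ℕ → ℕ) :=
  partsOf (T.ins 0) (T.rows 0) ++
    (List.range N).flatMap fun k => (partsOf (T.ins (k + 1)) (T.rows (k + 1))).tail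

/-- `β_i = α_1 + ⋯ + α_i` for `α = wt(T)` -/
def betaT (T : SSOT) (i : ℕ) : ℕ := ∑ k ∈ Finset.range i, (T.rows k).length

/-- the semistandardization value of the index `p ∈ [1, m']`:
the `i` with `β_{i-1} < p ≤ β_i` -/
noncomputable def vOf (T : SSOT) (p : ℕ) : ℕ := sInf {i | p ≤ betaT T i}

/-- the recording data of the reverse row-insertion procedure along the standardization
`lams`: `V p` are the recording tableaux, and `inv` records the involution pairs. -/
def PhiRec (lams : List (ℕ → ℕ)) (V : ℕ → List (List ℕ)) (inv : ℕ → ℕ) : Prop :=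
  V 0 = [] ∧
  ∀ p, p < lams.length - 1 →
    (∃ r, AddBox (lams.getD p zeroP) (lams.getD (p + 1) zeroP) r ∧
      V (p + 1) = placeAt (V p) r (p + 1)) ∨
    (∃ r j, AddBox (lams.getD (p + 1) zeroP) (lams.getD p zeroP) r ∧
      shapeOf (V (p + 1)) = lams.getD (p + 1) zeroP ∧
      rowInsert (V (p + 1)) j = V p ∧ inv (p + 1) = j ∧ inv j = p + 1)

/-- the graph of the map `Φ`: `M` is the semistandardization (with respect to `wt T`) of
the fixed-point-free involution `inv` produced by the reverse row-insertion recording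
procedure on the standardization of `T`. -/
def PhiRel (T : SSOT) (M : ℕ → ℕ → ℕ) : Prop :=
  ∃ (N : ℕ) (V : ℕ → List (List ℕ)) (inv : ℕ → ℕ),
    (∀ i, N ≤ i → T.rows i = []) ∧
    PhiRec (stdConcat T N) V inv ∧
    ∀ a b, M a b =
      ((Finset.Icc 1 ((stdConcat T N).length - 1)).filter
        (fun p => vOf T p = a ∧ vOf T (inv p) = b)).card

/-! ### the explicit local crystal operators on SSOT -/

def posM (l : List ℤ) : Multiset ℕ :=
  ↑(l.filterMap fun z => if 0 < z then some z.toNat else none)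

def negM (l : List ℤ) : Multiset ℕ :=
  ↑(l.filterMap fun z => if z < 0 then some (-z).toNat else none)

/-- `A ↑ B = (A \ B) ⊎ ((A ∩ B) + 1)` -/
def upM (A B : Multiset ℕ) : Multiset ℕ := (A - B) + (A ∩ B).map (· + 1)

/-- `A ↓ B = (A \ B) ⊎ ((A ∩ B) - 1)` -/
def downM (A B : Multiset ℕ) : Multiset ℕ := (A - B) + (A ∩ B).map (· - 1)

/-- the multiset `C_i(T) = r⁺(T^{(i)}) ⊎ (- r̄⁻(T^{(i)}))` (paper-indexed `i ≥ 1`) -/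
def Cmul (T : SSOT) (i : ℕ) : Multiset ℤ :=
  (posM (T.rows (i - 1))).map (fun n => (n : ℤ)) +
    (upM (negM (T.rows (i - 1))) (posM (T.rows i))).map (fun n => -(n : ℤ))

/-- the multiset `D_i(T) = r̄⁺(T^{(i+1)}) ⊎ (- r⁻(T^{(i+1)}))` (paper-indexed `i ≥ 1`) -/
def Dmul (T : SSOT) (i : ℕ) : Multiset ℤ :=
  (upM (posM (T.rows i)) (negM (T.rows (i - 1)))).map (fun n => (n : ℤ)) +
    (negM (T.rows i)).map (fun n => -(n : ℤ))

noncomputable def sortDesc (s : Multiset ℤ) : List ℤ := (s.sort (· ≤ ·)).reverse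

def removeLtInt (q : ℤ) : List ℤ → Option (List ℤ)
  | [] => none
  | p :: t => if p < q then some t else (removeLtInt q t).map (p :: ·)

/-- bracketing between `C` and `D` (both sorted decreasingly): pair `p ∈ C` with `q ∈ D`
whenever `p < q`; returns the unpaired elements of `C` and of `D`, decreasingly. -/
def pairZ (A B : List ℤ) : List ℤ × List ℤ :=
  B.foldl
    (fun st q =>
      match removeLtInt q st.1 with
      | some A' => (A', st.2)
      | none => (st.1, st.2 ++ [q]))
    (A, [])

def posZ (s : Multiset ℤ) : Multiset ℕ := (s.filter (fun z => 0 < z)).map Int.toNat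
def negZ (s : Multiset ℤ) : Multiset ℕ := (s.filter (fun z => z < 0)).map (fun z => (-z).toNat)

/-- row sequence of a strip with positive part `rp` and negative part `rm` -/
noncomputable def rowsFrom (rp rm : Multiset ℕ) : List ℤ :=
  ((rp.sort (· ≤ ·)).reverse).map (fun n => (n : ℤ)) ++
    (rm.sort (· ≤ ·)).map (fun n => -(n : ℤ))

/-- rebuild strips `i-1` and `i` (0-indexed) of `T` from new multisets `C`, `D` by
inverting the `↑`-operations -/
noncomputable def rebuild (T : SSOT) (i : ℕ) (C D : Multiset ℤ) : SSOT :=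
  let rows1 := rowsFrom (posZ C) (downM (negZ C) (posZ D))
  let rows2 := rowsFrom (downM (posZ D) (negZ C)) (negZ D)
  ⟨fun j => if j = i then outsideOf (T.ins (i - 1)) rows1 else T.ins j,
   fun j => if j = i - 1 then rows1 else if j = i then rows2 else T.rows j⟩

/-- raw local operator `ẽ_i` (paper-indexed `i ≥ 1`): after bracketing, move the largest
unpaired element of `D_i(T)` into `C_i(T)` -/
noncomputable def eLoc (i : ℕ) (T : SSOT) : Option SSOT :=
  match (pairZ (sortDesc (Cmul T i)) (sortDesc (Dmul T i))).2.head? with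
  | none => none
  | some b => some (rebuild T i (b ::ₘ Cmul T i) ((Dmul T i).erase b))

/-- raw local operator `f̃_i` (paper-indexed `i ≥ 1`): after bracketing, move the smallest
unpaired element of `C_i(T)` into `D_i(T)` -/
noncomputable def fLoc (i : ℕ) (T : SSOT) : Option SSOT :=
  match (pairZ (sortDesc (Cmul T i)) (sortDesc (Dmul T i))).1.getLast? with
  | none => none
  | some a => some (rebuild T i ((Cmul T i).erase a) (a ::ₘ Dmul T i))

/-- raw local operator `ẽ_0`: delete one addition and one removal of a box in row 1
from `T^{(1)}` -/
noncomputable def e0Loc (T : SSOT) : Option SSOT :=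
  if (1 : ℤ) ∈ T.rows 0 ∧ (-1 : ℤ) ∈ T.rows 0 then
    some ⟨T.ins, fun j => if j = 0 then ((T.rows 0).erase 1).erase (-1) else T.rows j⟩
  else none

/-- raw local operator `f̃_0`: append one addition and one removal of a box in row 1
to `T^{(1)}` -/
def f0Loc (T : SSOT) : Option SSOT :=
  some ⟨T.ins, fun j =>
    if j = 0 then
      ((T.rows 0).filter fun z => decide (0 < z)) ++
        (1 :: (-1) :: ((T.rows 0).filter fun z => decide (z < 0)))
    else T.rows j⟩

/-- the local operator `ẽ_i` relative to an ambient set: the result is `0` if it is not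
in the ambient set -/
noncomputable def eStepA (amb : SSOT → Prop) (i : ℕ) (T : SSOT) : Option SSOT :=
  match (if i = 0 then e0Loc T else eLoc i T) with
  | none => none
  | some T' => if amb T' then some T' else none

noncomputable def fStepA (amb : SSOT → Prop) (i : ℕ) (T : SSOT) : Option SSOT :=
  match (if i = 0 then f0Loc T else fLoc i T) with
  | none => none
  | some T' => if amb T' then some T' else none

noncomputable def ePowA (amb : SSOT → Prop) (i : ℕ) : ℕ → SSOT → Option SSOT
  | 0, T => some T
  | k + 1, T => (eStepA amb i T).bind (ePowA amb i k)

noncomputable def fPowA (amb : SSOT → Prop) (i : ℕ) : ℕ → SSOT → Option SSOT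
  | 0, T => some T
  | k + 1, T => (fStepA amb i T).bind (fPowA amb i k)

/-- `ε_i(T) = max {k : ẽ_i^k(T) ≠ 0}` -/
noncomputable def epsA (amb : SSOT → Prop) (i : ℕ) (T : SSOT) : ℕ :=
  sSup {k | (ePowA amb i k T).isSome}

/-- `φ_i(T) = max {k : f̃_i^k(T) ≠ 0}` -/
noncomputable def phiA (amb : SSOT → Prop) (i : ℕ) (T : SSOT) : ℕ :=
  sSup {k | (fPowA amb i k T).isSome}


/-- `β_i = α_1 + ⋯ + α_i` where `α_k` is the `k`-th row sum of `M` -/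
def betaM (M : ℕ → ℕ → ℕ) (m i : ℕ) : ℕ := ∑ k ∈ Finset.Icc 1 i, rowSumM M m k

/-- the standardization of the two-line array `w_M`: the bottom entries equal to `j` are
replaced, from left to right, by `β_j, β_j - 1, …, β_{j-1}+1`. -/
def wstd (M : ℕ → ℕ → ℕ) (m p : ℕ) : ℕ :=
  betaM M m ((twoLine M m).getD (p - 1) (0, 0)).2 + 1 -
    (((twoLine M m).take p).filter
      (fun c => c.2 == ((twoLine M m).getD (p - 1) (0, 0)).2)).length

/-! ### helpers for Statement 5 -/

def g5 (M : ℕ → ℕ → ℕ) (a : ℕ) : ℕ → List (ℕ × ℕ) :=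
  fun j => List.replicate (M a (j + 1)) (a, j + 1)

def F5 (M : ℕ → ℕ → ℕ) (m : ℕ) : ℕ → List (ℕ × ℕ) :=
  fun i => ((List.range m).reverse).flatMap (g5 M (i + 1))

def G5 (M : ℕ → ℕ → ℕ) (m a b : ℕ) : ℕ := ∑ j ∈ Finset.Icc (b + 1) m, M a j

def S5 (M : ℕ → ℕ → ℕ) (a b : ℕ) : ℕ := ∑ i ∈ Finset.Icc 1 (a - 1), M i b

lemma twoLine5 (M : ℕ → ℕ → ℕ) (m : ℕ) :
    twoLine M m = (List.range m).flatMap (F5 M m) := rfl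

lemma sum5_range (f : ℕ → ℕ) (n : ℕ) :
    ((List.range n).map f).sum = ∑ i ∈ Finset.range n, f i := rfl

lemma sum5_range' (f : ℕ → ℕ) (s n : ℕ) :
    ((List.range' s n).map f).sum = ∑ i ∈ Finset.range n, f (s + i) := by
  rw [List.range'_eq_map_range, List.map_map]; rfl

lemma sum5_Icc (f : ℕ → ℕ) (s n : ℕ) :
    ∑ j ∈ Finset.Icc (s + 1) (s + n), f j = ∑ i ∈ Finset.range n, f (s + 1 + i) := by
  rw [← Finset.Ico_add_one_right_eq_Icc, Finset.sum_Ico_eq_sum_range]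
  have h : s + n + 1 - (s + 1) = n := by omega
  rw [h]

lemma Icc1_sum (f : ℕ → ℕ) (n : ℕ) :
    ∑ k ∈ Finset.Icc 1 n, f k = ∑ i ∈ Finset.range n, f (i + 1) := by
  rw [show Finset.Icc 1 n = Finset.Icc (0 + 1) (0 + n) by norm_num, sum5_Icc]
  exact Finset.sum_congr rfl fun i _ => by congr 1; omega

lemma rowSum5 (M : ℕ → ℕ → ℕ) (m i : ℕ) :
    rowSumM M m i = ∑ j ∈ Finset.Icc 1 m, M i j := by
  rw [Icc1_sum]
  exact Finset.sum_congr rfl fun j _ => rfl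

lemma beta5_zero (M : ℕ → ℕ → ℕ) (m : ℕ) : betaM M m 0 = 0 := by simp [betaM]

lemma beta5_succ (M : ℕ → ℕ → ℕ) (m b : ℕ) (hb : 1 ≤ b) :
    betaM M m b = betaM M m (b - 1) + rowSumM M m b := by
  obtain ⟨c, rfl⟩ : ∃ c, b = c + 1 := ⟨b - 1, by omega⟩
  simp only [betaM, Nat.add_sub_cancel]
  exact Finset.sum_Icc_succ_top (by omega) _

lemma beta5_mono (M : ℕ → ℕ → ℕ) (m : ℕ) {i j : ℕ} (h : i ≤ j) :
    betaM M m i ≤ betaM M m j :=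
  Finset.sum_le_sum_of_subset (Finset.Icc_subset_Icc_right h)

lemma beta5_eq_range (M : ℕ → ℕ → ℕ) (m n : ℕ) :
    betaM M m n = ∑ i ∈ Finset.range n, rowSumM M m (i + 1) := Icc1_sum _ n

lemma G5_last (M : ℕ → ℕ → ℕ) (m a : ℕ) : G5 M m a m = 0 := by
  simp [G5]

lemma G5_zero (M : ℕ → ℕ → ℕ) (m a : ℕ) : G5 M m a 0 = rowSumM M m a := by
  rw [rowSum5]; rfl

lemma G5_succ (M : ℕ → ℕ → ℕ) (m a b : ℕ) (hb : 1 ≤ b) (hbm : b ≤ m) :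
    G5 M m a (b - 1) = M a b + G5 M m a b := by
  have h : Finset.Icc (b - 1 + 1) m = insert b (Finset.Icc (b + 1) m) := by
    ext x; simp; omega
  rw [G5, h, Finset.sum_insert (by simp), G5]

lemma G5_anti (M : ℕ → ℕ → ℕ) (m a : ℕ) {b b' : ℕ} (h : b ≤ b') :
    G5 M m a b' ≤ G5 M m a b :=
  Finset.sum_le_sum_of_subset (Finset.Icc_subset_Icc_left (by omega))

lemma G5_bound (M : ℕ → ℕ → ℕ) (m a b : ℕ) (hb : 1 ≤ b) (hbm : b ≤ m) :
    M a b + G5 M m a b ≤ rowSumM M m a := by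
  rw [← G5_succ M m a b hb hbm, ← G5_zero M m a]
  exact G5_anti M m a (by omega)

lemma G5_eq_range (M : ℕ → ℕ → ℕ) (m a b : ℕ) (hbm : b ≤ m) :
    G5 M m a b = ∑ i ∈ Finset.range (m - b), M a (b + 1 + i) := by
  rw [G5, show Finset.Icc (b + 1) m = Finset.Icc (b + 1) (b + (m - b)) by congr 1; omega,
    sum5_Icc]

lemma countP5_flatMap {α α' : Type*} (p : α → Bool) (f : α' → List α) :
    ∀ l : List α', (l.flatMap f).countP p = (l.map fun x => (f x).countP p).sum
  | [] => by simp
  | x :: l => by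
    simp [List.flatMap_cons, List.countP_append, countP5_flatMap p f l]

lemma countP5_replicate {α : Type*} (p : α → Bool) (x : α) (n : ℕ) :
    (List.replicate n x).countP p = if p x then n else 0 := by
  rw [List.countP_eq_length_filter, List.filter_replicate]
  split <;> simp

lemma F5_length (M : ℕ → ℕ → ℕ) (m i : ℕ) :
    (F5 M m i).length = rowSumM M m (i + 1) := by
  rw [F5, List.length_flatMap, List.map_reverse, List.sum_reverse, sum5_range]
  exact Finset.sum_congr rfl fun j _ => by simp [g5]

lemma twoLine5_length (M : ℕ → ℕ → ℕ) (m : ℕ) :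
    (twoLine M m).length = betaM M m m := by
  rw [twoLine5, List.length_flatMap, sum5_range, beta5_eq_range]
  exact Finset.sum_congr rfl fun i _ => by simpa using F5_length M m i

lemma countP5_F (M : ℕ → ℕ → ℕ) (m i b : ℕ) (hb : 1 ≤ b) (hbm : b ≤ m) :
    (F5 M m i).countP (fun c => c.2 == b) = M (i + 1) b := by
  rw [F5, countP5_flatMap, List.map_reverse, List.sum_reverse, sum5_range]
  have h : ∀ j, ((g5 M (i + 1) j).countP fun c => c.2 == b)
      = if j = b - 1 then M (i + 1) b else 0 := by
    intro j
    rw [g5, countP5_replicate]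
    by_cases hj : j = b - 1
    · subst hj; simp [show b - 1 + 1 = b by omega]
    · have hj1 : ¬ (j + 1 = b) := by omega
      simp [hj1, hj]
  rw [Finset.sum_congr rfl fun j _ => h j, Finset.sum_ite_eq']
  simp [show b - 1 < m by omega]

lemma range5_split (b m : ℕ) (hbm : b ≤ m) :
    List.range m = List.range b ++ List.range' b (m - b) := by
  rw [List.range_eq_range', List.range_eq_range']
  conv_lhs => rw [show m = m - b + b by omega]
  have h := List.range'_append (s := 0) (m := b) (n := m - b) (step := 1)
  simp only [Nat.one_mul, Nat.zero_add] at h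
  rw [Nat.add_comm b (m - b)] at h
  exact h.symm

lemma range5_split' (a : ℕ) (ha : 1 ≤ a) :
    List.range a = List.range (a - 1) ++ [a - 1] := by
  obtain ⟨c, rfl⟩ : ∃ c, a = c + 1 := ⟨a - 1, by omega⟩
  simp [List.range_succ]

lemma decomp5 (M : ℕ → ℕ → ℕ) (m a b : ℕ)
    (ha : 1 ≤ a) (ham : a ≤ m) (hb : 1 ≤ b) (hbm : b ≤ m) :
    ∃ L1 L2 : List (ℕ × ℕ),
      twoLine M m = L1 ++ (List.replicate (M a b) (a, b) ++ L2) ∧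
      L1.length = betaM M m (a - 1) + G5 M m a b ∧
      L1.countP (fun c => c.2 == b) = S5 M a b := by
  refine ⟨(List.range (a - 1)).flatMap (F5 M m)
      ++ ((List.range' b (m - b)).reverse).flatMap (g5 M a),
    ((List.range (b - 1)).reverse).flatMap (g5 M a)
      ++ (List.range' a (m - a)).flatMap (F5 M m), ?_, ?_, ?_⟩
  · rw [twoLine5, range5_split a m ham, range5_split' a ha, List.append_assoc,
      List.flatMap_append, List.flatMap_append]
    have hFa : F5 M m (a - 1) = ((List.range' b (m - b)).reverse).flatMap (g5 M a)
        ++ (List.replicate (M a b) (a, b)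
          ++ ((List.range (b - 1)).reverse).flatMap (g5 M a)) := by
      rw [F5, show a - 1 + 1 = a by omega, range5_split b m hbm,
        List.reverse_append, List.flatMap_append, range5_split' b hb,
        List.reverse_append, List.flatMap_append]
      simp only [List.reverse_singleton, List.flatMap_cons, List.flatMap_nil,
        List.append_nil, List.append_assoc]
      congr 2
      simp [g5, show b - 1 + 1 = b by omega]
    rw [List.flatMap_cons, hFa]
    simp [List.append_assoc]
  · rw [List.length_append, List.length_flatMap, sum5_range]
    congr 1
    · rw [beta5_eq_range]
      exact Finset.sum_congr rfl fun i _ => by simpa using F5_length M m i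
    · rw [List.length_flatMap, List.map_reverse, List.sum_reverse, sum5_range',
        G5_eq_range M m a b hbm]
      apply Finset.sum_congr rfl fun i _ => ?_
      simp only [Function.comp_apply, g5, List.length_replicate]
      congr 1
      omega
  · rw [List.countP_append, countP5_flatMap, countP5_flatMap]
    have h2 : (((List.range' b (m - b)).reverse).map
        fun x => ((g5 M a x).countP fun c => c.2 == b)).sum = 0 := by
      rw [List.map_reverse, List.sum_reverse, sum5_range']
      apply Finset.sum_eq_zero
      intro i _
      rw [g5, countP5_replicate]
      have hne : ¬ (b + i + 1 = b) := by omega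
      simp [hne]
    rw [h2, Nat.add_zero, sum5_range, S5, Icc1_sum]
    exact Finset.sum_congr rfl fun i _ => countP5_F M m i b hb hbm

lemma getD5 (M : ℕ → ℕ → ℕ) (m a b t : ℕ)
    (ha : 1 ≤ a) (ham : a ≤ m) (hb : 1 ≤ b) (hbm : b ≤ m)
    (ht1 : 1 ≤ t) (ht2 : t ≤ M a b) :
    (twoLine M m).getD (betaM M m (a - 1) + G5 M m a b + t - 1) (0, 0) = (a, b) := by
  obtain ⟨L1, L2, hEq, hLen, -⟩ := decomp5 M m a b ha ham hb hbm
  rw [hEq, List.getD_eq_getElem?_getD,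
    List.getElem?_append_right (by omega : L1.length ≤ betaM M m (a - 1) + G5 M m a b + t - 1)]
  have hidx : betaM M m (a - 1) + G5 M m a b + t - 1 - L1.length = t - 1 := by omega
  rw [hidx, List.getElem?_append_left (by simp; omega), List.getElem?_replicate,
    if_pos (by omega)]
  rfl

lemma take5 (M : ℕ → ℕ → ℕ) (m a b t : ℕ)
    (ha : 1 ≤ a) (ham : a ≤ m) (hb : 1 ≤ b) (hbm : b ≤ m)
    (ht1 : 1 ≤ t) (ht2 : t ≤ M a b) :
    ((twoLine M m).take (betaM M m (a - 1) + G5 M m a b + t)).countP (fun c => c.2 == b)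
      = S5 M a b + t := by
  obtain ⟨L1, L2, hEq, hLen, hCnt⟩ := decomp5 M m a b ha ham hb hbm
  rw [hEq, show betaM M m (a - 1) + G5 M m a b + t = L1.length + t by omega,
    List.take_append, List.take_of_length_le (by omega : L1.length ≤ L1.length + t),
    Nat.add_sub_cancel_left, List.countP_append, hCnt,
    List.take_append_of_le_length (by simp; omega), List.take_replicate,
    show t ⊓ M a b = t by omega, countP5_replicate]
  simp

lemma wstd5 (M : ℕ → ℕ → ℕ) (m a b t : ℕ)
    (ha : 1 ≤ a) (ham : a ≤ m) (hb : 1 ≤ b) (hbm : b ≤ m)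
    (ht1 : 1 ≤ t) (ht2 : t ≤ M a b) :
    wstd M m (betaM M m (a - 1) + G5 M m a b + t)
      = betaM M m b + 1 - (S5 M a b + t) := by
  rw [wstd, getD5 M m a b t ha ham hb hbm ht1 ht2, ← List.countP_eq_length_filter]
  rw [show (fun c : ℕ × ℕ => c.2 == ((a, b).2 : ℕ)) = (fun c : ℕ × ℕ => c.2 == b) from rfl,
    take5 M m a b t ha ham hb hbm ht1 ht2]

lemma chain5 (M : ℕ → ℕ → ℕ) (m : ℕ) (hsym : ∀ p q, M p q = M q p) (a b : ℕ)
    (ha : 1 ≤ a) (ham : a ≤ m) (hb : 1 ≤ b) (hbm : b ≤ m) :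
    betaM M m b = betaM M m (b - 1) + G5 M m b a + S5 M a b + M a b := by
  rw [beta5_succ M m b hb, rowSum5]
  have hsplit : ∑ j ∈ Finset.Icc 1 m, M b j
      = (∑ j ∈ Finset.Icc 1 a, M b j) + G5 M m b a := by
    rw [G5, ← Finset.Ico_add_one_right_eq_Icc 1 m, ← Finset.Ico_add_one_right_eq_Icc 1 a, ← Finset.Ico_add_one_right_eq_Icc (a + 1) m]
    exact (Finset.sum_Ico_consecutive _ (by omega) (by omega)).symm
  have h2 : ∑ j ∈ Finset.Icc 1 a, M b j = S5 M a b + M a b := by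
    rw [Finset.sum_congr rfl fun j _ => hsym b j]
    obtain ⟨c, rfl⟩ : ∃ c, a = c + 1 := ⟨a - 1, by omega⟩
    rw [Finset.sum_Icc_succ_top (by omega)]
    simp [S5]
  omega

lemma rep5_exists (M : ℕ → ℕ → ℕ) (m : ℕ) (hm : 1 ≤ m) (p : ℕ)
    (h1 : 1 ≤ p) (h2 : p ≤ betaM M m m) :
    ∃ a b t, 1 ≤ a ∧ a ≤ m ∧ 1 ≤ b ∧ b ≤ m ∧ 1 ≤ t ∧ t ≤ M a b ∧
      p = betaM M m (a - 1) + G5 M m a b + t := by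
  classical
  have hex : ∃ a, p ≤ betaM M m a := ⟨m, h2⟩
  set a := Nat.find hex with ha
  have hpa : p ≤ betaM M m a := Nat.find_spec hex
  have ham : a ≤ m := Nat.find_min' hex h2
  have ha1 : 1 ≤ a := by
    by_contra h
    have h0 : a = 0 := by omega
    rw [h0, beta5_zero] at hpa
    omega
  have hlt : ¬ p ≤ betaM M m (a - 1) := Nat.find_min hex (by omega)
  push_neg at hlt
  have hstep : betaM M m a = betaM M m (a - 1) + rowSumM M m a := beta5_succ M m a ha1
  have hex2 : ∃ b, G5 M m a b < p - betaM M m (a - 1) := ⟨m, by rw [G5_last]; omega⟩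
  set b := Nat.find hex2 with hbdef
  have hGb : G5 M m a b < p - betaM M m (a - 1) := Nat.find_spec hex2
  have hbm : b ≤ m := Nat.find_min' hex2 (by rw [G5_last]; omega)
  have hb1 : 1 ≤ b := by
    by_contra h
    have h0 : b = 0 := by omega
    rw [h0, G5_zero] at hGb
    omega
  have hmin : ¬ G5 M m a (b - 1) < p - betaM M m (a - 1) := Nat.find_min hex2 (by omega)
  push_neg at hmin
  rw [G5_succ M m a b hb1 hbm] at hmin
  exact ⟨a, b, p - betaM M m (a - 1) - G5 M m a b, ha1, ham, hb1, hbm,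
    by omega, by omega, by omega⟩

lemma rep5_bounds (M : ℕ → ℕ → ℕ) (m a b t : ℕ)
    (ha : 1 ≤ a) (ham : a ≤ m) (hb : 1 ≤ b) (hbm : b ≤ m)
    (ht1 : 1 ≤ t) (ht2 : t ≤ M a b) :
    betaM M m (a - 1) < betaM M m (a - 1) + G5 M m a b + t ∧
      betaM M m (a - 1) + G5 M m a b + t ≤ betaM M m a := by
  have hbd := G5_bound M m a b hb hbm
  have hstep := beta5_succ M m a ha
  omega

lemma a5_unique (M : ℕ → ℕ → ℕ) (m : ℕ) {a i p : ℕ}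
    (h1 : betaM M m (a - 1) < p) (h2 : p ≤ betaM M m a)
    (h3 : betaM M m (i - 1) < p) (h4 : p ≤ betaM M m i) : a = i := by
  by_contra h
  rcases Nat.lt_or_ge a i with hlt | hge
  · have := beta5_mono M m (show a ≤ i - 1 by omega); omega
  · have := beta5_mono M m (show i ≤ a - 1 by omega); omega

/-- for `M ∈ M̂_m`, the standardization of `w_M` is a fixed-point-free
involution of `{1,…,m'}` which is strictly decreasing on each block
`[β_{i-1}+1, β_i]`. -/

theorem standardization_is_involution (m : ℕ) (hm : 1 ≤ m) (M : ℕ → ℕ → ℕ)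
    (hsupp : suppIn M m) (hsym : ∀ p q, M p q = M q p) (hdiag : ∀ p, 2 ∣ M p p) :
    (∀ p, 1 ≤ p → p ≤ (twoLine M m).length →
      1 ≤ wstd M m p ∧ wstd M m p ≤ (twoLine M m).length ∧
      wstd M m (wstd M m p) = p ∧ wstd M m p ≠ p) ∧
    (∀ i, 1 ≤ i → i ≤ m → ∀ p, betaM M m (i - 1) + 1 ≤ p → p + 1 ≤ betaM M m i →
      wstd M m (p + 1) < wstd M m p) := by
  have hL : (twoLine M m).length = betaM M m m := twoLine5_length M m
  constructor
  · intro p hp1 hp2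
    rw [hL] at hp2
    obtain ⟨a, b, t, ha, ham, hb, hbm, ht1, ht2, hp⟩ := rep5_exists M m hm p hp1 hp2
    set t' := M a b + 1 - t with ht'
    have ht'1 : 1 ≤ t' := by omega
    have ht'2 : t' ≤ M b a := by rw [hsym b a]; omega
    have hch : betaM M m b = betaM M m (b - 1) + G5 M m b a + S5 M a b + M a b :=
      chain5 M m hsym a b ha ham hb hbm
    have hw : wstd M m p = betaM M m (b - 1) + G5 M m b a + t' := by
      rw [hp, wstd5 M m a b t ha ham hb hbm ht1 ht2]
      omega
    have hch' : betaM M m a = betaM M m (a - 1) + G5 M m a b + S5 M b a + M b a :=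
      chain5 M m hsym b a hb hbm ha ham
    have hww : wstd M m (wstd M m p) = p := by
      rw [hw, wstd5 M m b a t' hb hbm ha ham ht'1 ht'2, hp]
      have hba : M b a = M a b := hsym b a
      omega
    have hmb := beta5_mono M m hbm
    refine ⟨by omega, ?_, hww, ?_⟩
    · rw [hL, hw]
      have h1 := G5_bound M m b a ha ham
      have h2 := beta5_succ M m b hb
      have hba : M b a = M a b := hsym b a
      omega
    · intro hfix
      have hg1 : (twoLine M m).getD (p - 1) (0, 0) = (a, b) := by
        rw [hp]; exact getD5 M m a b t ha ham hb hbm ht1 ht2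
      have hg2 : (twoLine M m).getD (wstd M m p - 1) (0, 0) = (b, a) := by
        rw [hw]; exact getD5 M m b a t' hb hbm ha ham ht'1 ht'2
      rw [hfix, hg1] at hg2
      have hab : a = b := by simpa using congrArg Prod.fst hg2
      have heq2 : betaM M m (a - 1) + G5 M m a b + t
          = betaM M m (b - 1) + G5 M m b a + t' := by
        rw [← hp, ← hw, hfix]
      subst hab
      have hd := hdiag a
      omega
  · intro i hi1 him p hp1 hp2
    have hmb := beta5_mono M m him
    obtain ⟨a, b, t, ha, ham, hb, hbm1, ht1, ht2, hp⟩ :=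
      rep5_exists M m hm p (by omega) (by omega)
    obtain ⟨a', b', t', ha', ham', hb', hbm2, ht1', ht2', hp'⟩ :=
      rep5_exists M m hm (p + 1) (by omega) (by omega)
    have hba := rep5_bounds M m a b t ha ham hb hbm1 ht1 ht2
    have hba' := rep5_bounds M m a' b' t' ha' ham' hb' hbm2 ht1' ht2'
    have hai : a = i :=
      a5_unique M m (p := p) (by omega) (by omega) (by omega) (by omega)
    have hai' : a' = i :=
      a5_unique M m (p := p + 1) (by omega) (by omega) (by omega) (by omega)
    have haa : a' = a := hai'.trans hai.symm
    rw [haa] at hp' ht2'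
    have hwp : wstd M m p = betaM M m b + 1 - (S5 M a b + t) := by
      rw [hp]; exact wstd5 M m a b t ha ham hb hbm1 ht1 ht2
    have hwp' : wstd M m (p + 1) = betaM M m b' + 1 - (S5 M a b' + t') := by
      rw [hp']; exact wstd5 M m a b' t' ha ham hb' hbm2 ht1' ht2'
    have hchb := chain5 M m hsym a b ha ham hb hbm1
    have hchb' := chain5 M m hsym a b' ha ham hb' hbm2
    by_cases hbb : b' = b
    · subst hbb
      omega
    · have hblt : b' < b := by
        by_contra hc
        push_neg at hc
        have h1 : M a b' + G5 M m a b' ≤ G5 M m a b := by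
          rw [← G5_succ M m a b' hb' hbm2]
          exact G5_anti M m a (by omega)
        omega
      have hmono := beta5_mono M m (show b' ≤ b - 1 by omega)
      omega

end KingSSOT
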